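/- Suppose h_max has a unique minimizer b_g over {0,1}^n, with λ₁ = h_max(b_g) > 0, λ₂ = min over b ≠ b_g of h_max(b), and r = (λ₂ − λ₁)/λ₁. Then for every positive integer p, setting ν₁ = h_p(b_g) and ν₂ = min over b ≠ b_g of h_p(b), the ratio of the approximated energies grows polynomially in the approximation level: ν₂/ν₁ ≥ (1/M) · (r + 1)^p. -/

import Mathlib

/-- **Polynomial growth of the approximated energy ratio.**
If `h_max` has a unique minimizer `b_g`, with `λ₁ = h_max(b_g) > 0`,
`λ₂ = min_{b ≠ b_g} h_max(b)` and `r = (λ₂ − λ₁)/λ₁`, then for every positive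
integer `p`, with `ν₁ = h_p(b_g)` and `ν₂ = min_{b ≠ b_g} h_p(b)`,
`ν₂/ν₁ ≥ (1/M) · (r + 1)^p`. -/
theorem moqa_energy_ratio_growth
    (n M p : ℕ) (hM : 1 ≤ M) (hp : 1 ≤ p) (hn : 1 ≤ n)
    (h : Fin M → (Fin n → Bool) → ℝ)
    (hnn : ∀ m b, 0 ≤ h m b)
    (hmax hP : (Fin n → Bool) → ℝ)
    (hmax_def : ∀ b, IsGreatest (Set.range fun m => h m b) (hmax b))
    (hP_def : ∀ b, hP b = ∑ m : Fin M, (h m b) ^ p)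
    (bg : Fin n → Bool)
    (hunique : ∀ b ≠ bg, hmax bg < hmax b)
    (lam1 lam2 r : ℝ)
    (hlam1 : lam1 = hmax bg)
    (hlam1pos : 0 < lam1)
    (hlam2 : IsLeast (hmax '' {b | b ≠ bg}) lam2)
    (hr : r = (lam2 - lam1) / lam1)
    (nu1 nu2 : ℝ)
    (hnu1 : nu1 = hP bg)
    (hnu2 : IsLeast (hP '' {b | b ≠ bg}) nu2) :
    nu2 / nu1 ≥ (1 / (M : ℝ)) * (r + 1) ^ p := by
  -- basic facts
  have hlam2nn : 0 ≤ lam2 := by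
    obtain ⟨b0, hb0, hb0eq⟩ := hlam2.1
    have := hunique b0 hb0
    nlinarith [hlam1pos, hlam1]
  -- ν₁ ≤ M * lam1 ^ p
  have hterm_le : ∀ m : Fin M, h m bg ≤ lam1 := by
    intro m
    rw [hlam1]
    exact (hmax_def bg).2 ⟨m, rfl⟩
  have hnu1_le : nu1 ≤ (M : ℝ) * lam1 ^ p := by
    rw [hnu1, hP_def]
    calc ∑ m : Fin M, (h m bg) ^ p ≤ ∑ _m : Fin M, lam1 ^ p := by
          apply Finset.sum_le_sum
          intro m _
          exact pow_le_pow_left₀ (hnn m bg) (hterm_le m) p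
      _ = (M : ℝ) * lam1 ^ p := by simp [Finset.sum_const, mul_comm]
  -- ν₁ > 0
  have hnu1pos : 0 < nu1 := by
    obtain ⟨m0, hm0⟩ := (hmax_def bg).1
    rw [hnu1, hP_def]
    apply Finset.sum_pos'
    · intro m _; exact pow_nonneg (hnn m bg) p
    · refine ⟨m0, Finset.mem_univ _, ?_⟩
      apply pow_pos
      have : h m0 bg = hmax bg := hm0
      rw [this, ← hlam1]; exact hlam1pos
  -- ν₂ ≥ lam2 ^ p
  have hnu2_ge : lam2 ^ p ≤ nu2 := by
    obtain ⟨b0, hb0, hb0eq⟩ := hnu2.1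
    have hmaxge : lam2 ≤ hmax b0 := hlam2.2 ⟨b0, hb0, rfl⟩
    obtain ⟨m0, hm0⟩ := (hmax_def b0).1
    have h1 : lam2 ^ p ≤ (h m0 b0) ^ p := by
      apply pow_le_pow_left₀ hlam2nn
      rw [show h m0 b0 = hmax b0 from hm0]; exact hmaxge
    have h2 : (h m0 b0) ^ p ≤ hP b0 := by
      rw [hP_def]
      exact Finset.single_le_sum (f := fun m => (h m b0) ^ p)
        (fun m _ => pow_nonneg (hnn m b0) p) (Finset.mem_univ m0)
    rw [← hb0eq]; linarith
  -- (r+1) = lam2 / lam1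
  have hr1 : r + 1 = lam2 / lam1 := by
    rw [hr]; field_simp; ring
  have hMpos : (0:ℝ) < M := by exact_mod_cast Nat.lt_of_lt_of_le Nat.zero_lt_one hM
  rw [ge_iff_le, le_div_iff₀ hnu1pos]
  calc 1 / (M:ℝ) * (r+1)^p * nu1 ≤ 1 / (M:ℝ) * (r+1)^p * ((M:ℝ) * lam1 ^ p) := by
        apply mul_le_mul_of_nonneg_left hnu1_le
        have : 0 ≤ r + 1 := by rw [hr1]; positivity
        positivity
    _ = lam2 ^ p := by
        rw [hr1, div_pow]
        field_simp
    _ ≤ nu2 := by linarith
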